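/- Let x : [0,∞) → ℝⁿ and θ̂ : [0,∞) → ℝᵖ be differentiable along trajectories of ẋ = f(x) - Δ(x)ᵀθ + g(x)u with true parameter θ, and let h : ℝⁿ × ℝᵖ → ℝ be continuously differentiable. Define the barrier-like function h̄(t) = v(ρ(t))·(h(x(t), θ̂(t)) + η) - (1/(2γ))·‖θ̂(t) - θ‖², with adaptation laws θ̂' = γ·v(ρ)·Δ(x)·∇ₓh and ρ' = -(v(ρ)/v'(ρ))·(1/(h + η))·⟨∇_{θ̂}h, θ̂'⟩, where v is continuously differentiable with v'(ρ) ≠ 0 and h(x,θ̂) + η ≠ 0 along the trajectory. Then h̄'(t) = v(ρ(t))·⟨∇ₓh, f(x) - Δ(x)ᵀθ̂ + g(x)u⟩. -/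

import Mathlib

open Matrix

theorem stmt_7 {n m p : ℕ}
    (x : ℝ → (Fin n → ℝ)) (θhat : ℝ → (Fin p → ℝ)) (θ : Fin p → ℝ)
    (f : (Fin n → ℝ) → (Fin n → ℝ))
    (Δ : (Fin n → ℝ) → Matrix (Fin p) (Fin n) ℝ)
    (g : (Fin n → ℝ) → Matrix (Fin n) (Fin m) ℝ)
    (u : ℝ → (Fin m → ℝ))
    (h : (Fin n → ℝ) → (Fin p → ℝ) → ℝ)
    (gradx : ℝ → (Fin n → ℝ)) (gradθ : ℝ → (Fin p → ℝ))
    (v v' ρ ρ' : ℝ → ℝ) (γ η : ℝ) (hγ : 0 < γ) (hη : 0 < η)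
    -- system dynamics
    (hx : ∀ t, HasDerivAt x (f (x t) - (Δ (x t))ᵀ *ᵥ θ + g (x t) *ᵥ u t) t)
    -- direct adaptation law for θ̂
    (hθ : ∀ t, HasDerivAt θhat ((γ * v (ρ t)) • (Δ (x t) *ᵥ gradx t)) t)
    -- scaling function derivative
    (hv : ∀ r, HasDerivAt v (v' r) r) (hv' : ∀ r, v' r ≠ 0)
    (hnz : ∀ t, h (x t) (θhat t) + η ≠ 0)
    -- adaptation law for ρ
    (hρval : ∀ t, ρ' t =
      -(v (ρ t) / v' (ρ t)) * (1 / (h (x t) (θhat t) + η)) *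
        dotProduct (gradθ t) ((γ * v (ρ t)) • (Δ (x t) *ᵥ gradx t)))
    (hρ : ∀ t, HasDerivAt ρ (ρ' t) t)
    -- chain rule for h along the trajectory with gradients gradx, gradθ
    (hchain : ∀ t, HasDerivAt (fun s => h (x s) (θhat s))
      (dotProduct (gradx t) (f (x t) - (Δ (x t))ᵀ *ᵥ θ + g (x t) *ᵥ u t)
        + dotProduct (gradθ t) ((γ * v (ρ t)) • (Δ (x t) *ᵥ gradx t))) t) :
    ∀ t, HasDerivAt
      (fun s => v (ρ s) * (h (x s) (θhat s) + η)
        - (1 / (2 * γ)) * dotProduct (θhat s - θ) (θhat s - θ))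
      (v (ρ t) * dotProduct (gradx t)
        (f (x t) - (Δ (x t))ᵀ *ᵥ θhat t + g (x t) *ᵥ u t)) t := by
  intro t
  set w : Fin p → ℝ := (γ * v (ρ t)) • (Δ (x t) *ᵥ gradx t) with hw
  have hθi : ∀ i, HasDerivAt (fun s => θhat s i) (w i) t := by
    intro i
    exact (hasDerivAt_pi.mp (hθ t)) i
  have hA : HasDerivAt (fun s => v (ρ s)) (v' (ρ t) * ρ' t) t :=
    (hv (ρ t)).comp t (hρ t)
  have hB : HasDerivAt (fun s => h (x s) (θhat s) + η)
      (dotProduct (gradx t) (f (x t) - (Δ (x t))ᵀ *ᵥ θ + g (x t) *ᵥ u t)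
        + dotProduct (gradθ t) w) t := (hchain t).add_const η
  have hC : HasDerivAt (fun s => dotProduct (θhat s - θ) (θhat s - θ))
      (2 * dotProduct (θhat t - θ) w) t := by
    have : ∀ s, dotProduct (θhat s - θ) (θhat s - θ)
        = ∑ i, (θhat s i - θ i) * (θhat s i - θ i) := by
      intro s; simp [dotProduct, Pi.sub_apply]
    simp only [this]
    have h2 : (2 : ℝ) * dotProduct (θhat t - θ) w
        = ∑ i, ((w i) * (θhat t i - θ i) + (θhat t i - θ i) * (w i)) := by
      simp [dotProduct, Pi.sub_apply, Finset.mul_sum]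
      ring_nf
      exact Finset.sum_congr rfl (fun i _ => by ring)
    rw [h2]
    apply HasDerivAt.fun_sum
    intro i _
    exact ((hθi i).sub_const (θ i)).mul ((hθi i).sub_const (θ i))
  have hMain := (hA.mul hB).sub (hC.const_mul (1 / (2 * γ)))
  convert hMain using 1
  · rfl
  · rfl
  · rfl
  have hdot : dotProduct (θhat t - θ) (Δ (x t) *ᵥ gradx t)
      = dotProduct (gradx t) ((Δ (x t))ᵀ *ᵥ (θhat t - θ)) := by
    simp only [dotProduct, Matrix.mulVec, Matrix.transpose_apply,
      dotProduct, Finset.mul_sum, Finset.sum_mul]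
    rw [Finset.sum_comm]
    exact Finset.sum_congr rfl fun i _ => Finset.sum_congr rfl fun j _ => by ring
  have hsplit : dotProduct (gradx t)
        (f (x t) - (Δ (x t))ᵀ *ᵥ θhat t + g (x t) *ᵥ u t)
      = dotProduct (gradx t)
        (f (x t) - (Δ (x t))ᵀ *ᵥ θ + g (x t) *ᵥ u t)
        - dotProduct (gradx t) ((Δ (x t))ᵀ *ᵥ (θhat t - θ)) := by
    rw [← dotProduct_sub]
    congr 1
    rw [Matrix.mulVec_sub]
    funext i; simp [Pi.sub_apply]; ring
  have hρe : v' (ρ t) * ρ' t * (h (x t) (θhat t) + η)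
      = -(v (ρ t) * dotProduct (gradθ t) w) := by
    rw [hρval t, ← hw]
    set b := dotProduct (gradθ t) w with hb
    field_simp [hnz t, hv' (ρ t)]
  have hcw : dotProduct (θhat t - θ) w
      = γ * v (ρ t) * dotProduct (gradx t) ((Δ (x t))ᵀ *ᵥ (θhat t - θ)) := by
    rw [hw, dotProduct_smul, ← hdot]
    simp [smul_eq_mul]
  rw [hsplit]
  rw [hcw, hρe]
  have hγ' : γ ≠ 0 := ne_of_gt hγ
  field_simp
  ring
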